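/- TC(S¹) = 2: the product S¹ × S¹ is covered by the two open sets U = {(a,b) | b ≠ -a} and V = {(a,b) | b ≠ a}, each admitting a continuous local section of the path evaluation map, and no single open set covering S¹ × S¹ admits such a section. -/

import Mathlib

open Set
open Complex

/-- A continuous motion planner (local section of the path evaluation map) over `U`. -/
def HasMotionPlanner (X : Type*) [TopologicalSpace X] (U : Set (X × X)) : Prop :=
  ∃ s : U → C(unitInterval, X), Continuous s ∧
    ∀ p : U, s p 0 = (p : X × X).1 ∧ s p 1 = (p : X × X).2

/-- Farber's topological complexity: the minimal number `k` of open sets covering `X × X`,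
each admitting a continuous local section of the path evaluation map; `⊤` if none exists. -/
noncomputable def topComplexity (X : Type*) [TopologicalSpace X] : ℕ∞ :=
  sInf {N : ℕ∞ | ∃ k : ℕ, N = k ∧ ∃ U : Fin k → Set (X × X),
    (∀ i, IsOpen (U i)) ∧ (∀ p, ∃ i, p ∈ U i) ∧ ∀ i, HasMotionPlanner X (U i)}

/-- The unit circle in `ℝ²`. -/
abbrev S1 : Set (ℝ × ℝ) := {p | p.1 ^ 2 + p.2 ^ 2 = 1}

/-- `topComplexity(S¹) = 2`: the two open sets `U = {(a,b) | b ≠ -a}` and `V = {(a,b) | b ≠ a}` cover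
`S¹ × S¹` and each admits a continuous local section of the path evaluation map, while no
single open set covering `S¹ × S¹` (i.e. all of `S¹ × S¹`) admits such a section. -/


def tc (p : ↥S1) : ℂ := ⟨(p : ℝ × ℝ).1, (p : ℝ × ℝ).2⟩

lemma abs_tc (p : ↥S1) : ‖tc p‖ = 1 := by
  have h := p.2
  simp only [S1, mem_setOf_eq] at h
  rw [Complex.norm_def, Complex.normSq_apply]
  simp only [tc]
  rw [show (p : ℝ × ℝ).1 * (p : ℝ × ℝ).1 + (p : ℝ × ℝ).2 * (p : ℝ × ℝ).2 = 1 by nlinarith]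
  exact Real.sqrt_one

lemma tc_ne_zero (p : ↥S1) : tc p ≠ 0 := by
  intro h
  have := abs_tc p
  rw [h] at this; simp at this

lemma tc_eq (p : ↥S1) : tc p = ((p : ℝ × ℝ).1 : ℂ) + ((p : ℝ × ℝ).2 : ℂ) * I := by
  exact (Complex.mk_eq_add_mul_I _ _)

@[continuity, fun_prop]
lemma cont_tc : Continuous tc := by
  simp only [funext tc_eq]
  fun_prop

lemma tc_injective : Function.Injective tc := by
  intro p q h
  apply Subtype.ext
  have h1 : (tc p).re = (tc q).re := by rw [h]
  have h2 : (tc p).im = (tc q).im := by rw [h]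
  exact Prod.ext h1 h2

/-- build a point of S1 from a complex number of modulus one -/
def ofC (z : ℂ) (hz : ‖z‖ = 1) : ↥S1 :=
  ⟨(z.re, z.im), by
    simp only [S1, mem_setOf_eq]
    have : Complex.normSq z = 1 := by
      rw [← Complex.sq_norm, hz]; norm_num
    rw [Complex.normSq_apply] at this
    nlinarith⟩

lemma tc_ofC (z : ℂ) (hz : ‖z‖ = 1) : tc (ofC z hz) = z := rfl

lemma isCompact_S1 : IsCompact S1 := by
  rw [Metric.isCompact_iff_isClosed_bounded]
  refine ⟨isClosed_eq (by fun_prop) continuous_const, ?_⟩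
  apply (Metric.isBounded_closedBall (x := (0 : ℝ × ℝ)) (r := 1)).subset
  intro p hp
  simp only [S1, mem_setOf_eq] at hp
  simp only [Metric.mem_closedBall, dist_zero_right, Prod.norm_def, sup_le_iff,
    Real.norm_eq_abs]
  constructor
  · nlinarith [abs_nonneg p.1, _root_.sq_abs p.1, sq_nonneg p.2]
  · nlinarith [abs_nonneg p.2, _root_.sq_abs p.2, sq_nonneg p.1]

instance : CompactSpace ↥S1 := isCompact_iff_compactSpace.mp isCompact_S1

lemma S1_eq_range : S1 = range (fun t : ℝ => (Real.cos t, Real.sin t)) := by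
  ext p
  constructor
  · intro hp
    have h1 : ‖tc ⟨p, hp⟩‖ = 1 := abs_tc _
    refine ⟨Complex.arg (tc ⟨p, hp⟩), ?_⟩
    have hz : tc ⟨p, hp⟩ ≠ 0 := tc_ne_zero _
    have hc := Complex.cos_arg hz
    have hs := Complex.sin_arg (tc ⟨p, hp⟩)
    rw [h1] at hc hs
    simp only [div_one] at hc hs
    simp only [tc] at hc hs
    exact Prod.ext hc hs
  · rintro ⟨t, rfl⟩
    simp only [S1, mem_setOf_eq]
    exact Real.cos_sq_add_sin_sq t

instance : ConnectedSpace ↥S1 :=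
  isConnected_iff_connectedSpace.mp (S1_eq_range ▸ isConnected_range (by fun_prop))

/-- general helper: a jointly continuous family gives a motion planner -/
lemma hasMotionPlanner_of_family {X : Type*} [TopologicalSpace X] (U : Set (X × X))
    (F : ↥U × unitInterval → X) (hF : Continuous F)
    (h0 : ∀ p : U, F (p, 0) = (p : X × X).1) (h1 : ∀ p : U, F (p, 1) = (p : X × X).2) :
    HasMotionPlanner X U := by
  refine ⟨fun p => (ContinuousMap.curry ⟨F, hF⟩) p, ?_, fun p => ⟨h0 p, h1 p⟩⟩
  exact (ContinuousMap.curry ⟨F, hF⟩).continuous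

abbrev Uset : Set (↥S1 × ↥S1) := {p : ↥S1 × ↥S1 | (p.2 : ℝ × ℝ) ≠ -(p.1 : ℝ × ℝ)}
abbrev Vset : Set (↥S1 × ↥S1) := {p : ↥S1 × ↥S1 | p.2 ≠ p.1}

lemma mem_Uset_iff (p : ↥S1 × ↥S1) : p ∈ Uset ↔ tc p.2 ≠ -tc p.1 := by
  simp only [Uset, mem_setOf_eq, not_iff_not]
  constructor
  · intro h
    simp only [tc, h]
    exact Complex.ext rfl rfl
  · intro h
    have h1 : (tc p.2).re = (-tc p.1).re := by rw [h]
    have h2 : (tc p.2).im = (-tc p.1).im := by rw [h]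
    simp only [tc, Complex.neg_re, Complex.neg_im] at h1 h2
    exact Prod.ext h1 h2

lemma mem_Vset_iff (p : ↥S1 × ↥S1) : p ∈ Vset ↔ tc p.2 ≠ tc p.1 := by
  simp only [Vset, mem_setOf_eq, not_iff_not]
  exact ⟨fun h => by rw [h], fun h => tc_injective h⟩

lemma isOpen_Uset : IsOpen Uset := by
  have : Uset = {p : ↥S1 × ↥S1 | ((p.2 : ℝ × ℝ) = -(p.1 : ℝ × ℝ))}ᶜ := rfl
  rw [this]
  exact (isClosed_eq (by fun_prop) (by fun_prop)).isOpen_compl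

lemma isOpen_Vset : IsOpen Vset := by
  have : Vset = {p : ↥S1 × ↥S1 | p.2 = p.1}ᶜ := rfl
  rw [this]
  exact (isClosed_eq (by fun_prop) (by fun_prop)).isOpen_compl

lemma union_eq_univ : Uset ∪ Vset = univ := by
  rw [eq_univ_iff_forall]
  intro p
  by_contra h
  rw [mem_union, not_or] at h
  obtain ⟨h1, h2⟩ := h
  simp only [Uset, mem_setOf_eq, not_not] at h1
  simp only [Vset, mem_setOf_eq, not_not] at h2
  rw [h2] at h1
  have hmem := p.1.2
  simp only [S1, mem_setOf_eq] at hmem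
  have : (p.1 : ℝ × ℝ).1 = 0 ∧ (p.1 : ℝ × ℝ).2 = 0 := by
    constructor <;> [have := congrArg Prod.fst h1; have := congrArg Prod.snd h1] <;>
      simp at this <;> linarith
  rw [this.1, this.2] at hmem
  norm_num at hmem

lemma ofC_tc (q : ↥S1) (h : ‖tc q‖ = 1) : ofC (tc q) h = q := by
  apply tc_injective; rfl

lemma w_ne_zero {a b : ℂ} (ha : ‖a‖ = 1) (hb : ‖b‖ = 1)
    (hab : b ≠ -a) {s : ℝ} (hs0 : 0 ≤ s) (hs1 : s ≤ 1) :
    ((1 - s : ℝ) : ℂ) * a + (s : ℂ) * b ≠ 0 := by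
  intro h
  have habs : ‖((1 - s : ℝ) : ℂ) * a‖ = ‖(s : ℂ) * b‖ := by
    have : ((1 - s : ℝ) : ℂ) * a = -((s : ℂ) * b) := by linear_combination h
    rw [this, norm_neg]
  rw [norm_mul, norm_mul, ha, hb, Complex.norm_real, Complex.norm_real, Real.norm_eq_abs, Real.norm_eq_abs,
    _root_.abs_of_nonneg (by linarith), _root_.abs_of_nonneg hs0, mul_one, mul_one] at habs
  have hs : s = 1 / 2 := by linarith
  subst hs
  apply hab
  push_cast at h
  linear_combination 2 * h

def wU (q : ↥Uset × unitInterval) : ℂ :=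
  ((1 - (q.2 : ℝ) : ℝ) : ℂ) * tc (q.1 : ↥S1 × ↥S1).1 + (((q.2 : ℝ)) : ℂ) * tc (q.1 : ↥S1 × ↥S1).2

lemma wU_ne (q : ↥Uset × unitInterval) : wU q ≠ 0 :=
  w_ne_zero (abs_tc _) (abs_tc _) ((mem_Uset_iff _).mp q.1.2) q.2.2.1 q.2.2.2

lemma wU_cont : Continuous wU := by unfold wU; fun_prop

lemma abs_wU_div (q : ↥Uset × unitInterval) :
    ‖wU q / ((‖wU q‖ : ℝ) : ℂ)‖ = 1 := by
  rw [norm_div, Complex.norm_real, Real.norm_eq_abs, _root_.abs_of_nonneg (by positivity)]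
  exact div_self (norm_ne_zero_iff.mpr (wU_ne q))

lemma planner_U : HasMotionPlanner ↥S1 Uset := by
  apply hasMotionPlanner_of_family Uset
    (F := fun q => ofC (wU q / ((‖wU q‖ : ℝ) : ℂ)) (abs_wU_div q))
  · apply Continuous.subtype_mk
    have hd : Continuous fun q : ↥Uset × unitInterval => wU q / ((‖wU q‖ : ℝ) : ℂ) :=
      wU_cont.div (Complex.continuous_ofReal.comp (continuous_norm.comp wU_cont))
        (fun q => by simpa using norm_ne_zero_iff.mpr (wU_ne q))
    exact (Complex.continuous_re.comp hd).prodMk (Complex.continuous_im.comp hd)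
  · intro p
    apply tc_injective
    rw [tc_ofC]
    have hw : wU (p, 0) = tc (p : ↥S1 × ↥S1).1 := by
      simp [wU]
    rw [hw, abs_tc]
    norm_num
  · intro p
    apply tc_injective
    rw [tc_ofC]
    have hw : wU (p, 1) = tc (p : ↥S1 × ↥S1).2 := by
      simp [wU]
    rw [hw, abs_tc]
    norm_num

def rV (p : ↥Vset) : ℂ := -(tc (p : ↥S1 × ↥S1).2 * (starRingEnd ℂ) (tc (p : ↥S1 × ↥S1).1))

lemma abs_rV (p : ↥Vset) : ‖rV p‖ = 1 := by
  rw [rV, norm_neg, norm_mul, Complex.norm_conj, abs_tc, abs_tc, mul_one]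

lemma rV_ne_neg_one (p : ↥Vset) : rV p ≠ -1 := by
  intro h
  apply (mem_Vset_iff _).mp p.2
  have h' : tc (p : ↥S1 × ↥S1).2 * (starRingEnd ℂ) (tc (p : ↥S1 × ↥S1).1) = 1 := by
    have := congrArg Neg.neg h
    simpa [rV] using this
  have hc : tc (p : ↥S1 × ↥S1).1 * (starRingEnd ℂ) (tc (p : ↥S1 × ↥S1).1) = 1 := by
    rw [Complex.mul_conj]
    norm_cast
    rw [← Complex.sq_norm, abs_tc]; norm_num
  calc tc (p : ↥S1 × ↥S1).2
      = tc (p : ↥S1 × ↥S1).2 * ((starRingEnd ℂ) (tc (p : ↥S1 × ↥S1).1) * tc (p : ↥S1 × ↥S1).1) := by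
        rw [mul_comm ((starRingEnd ℂ) _), hc]; ring
    _ = tc (p : ↥S1 × ↥S1).1 := by linear_combination (tc (p : ↥S1 × ↥S1).1) * h'

lemma rV_mem_slitPlane (p : ↥Vset) : rV p ∈ Complex.slitPlane := by
  rw [Complex.mem_slitPlane_iff]
  by_contra h
  push_neg at h
  obtain ⟨h1, h2⟩ := h
  apply rV_ne_neg_one p
  have habs := abs_rV p
  have : (rV p).re = -1 := by
    rw [Complex.norm_def, Complex.normSq_apply, h2] at habs
    have h3 : Real.sqrt ((rV p).re * (rV p).re) = |(rV p).re| := by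
      rw [← Real.sqrt_sq_eq_abs]; ring_nf
    rw [mul_zero, add_zero, h3] at habs
    rw [abs_of_nonpos h1] at habs
    linarith
  exact Complex.ext (by simpa using this) (by simpa using h2)

lemma cont_argrV : Continuous fun p : ↥Vset => Complex.arg (rV p) := by
  rw [continuous_iff_continuousAt]
  intro p
  have hr : Continuous rV := by
    unfold rV
    exact ((cont_tc.comp (continuous_subtype_val.snd)).mul
      (Complex.continuous_conj.comp (cont_tc.comp (continuous_subtype_val.fst)))).neg
  exact (Complex.continuousAt_arg (rV_mem_slitPlane p)).comp hr.continuousAt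

lemma abs_FV (q : ↥Vset × unitInterval) :
    ‖tc (q.1 : ↥S1 × ↥S1).1 *
      Complex.exp ((((q.2 : ℝ) * (Complex.arg (rV q.1) + Real.pi) : ℝ) : ℂ) * Complex.I)‖ = 1 := by
  rw [norm_mul, abs_tc, Complex.norm_exp_ofReal_mul_I, mul_one]

lemma planner_V : HasMotionPlanner ↥S1 Vset := by
  apply hasMotionPlanner_of_family Vset
    (F := fun q => ofC _ (abs_FV q))
  · apply Continuous.subtype_mk
    have hd : Continuous fun q : ↥Vset × unitInterval => tc (q.1 : ↥S1 × ↥S1).1 *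
        Complex.exp ((((q.2 : ℝ) * (Complex.arg (rV q.1) + Real.pi) : ℝ) : ℂ) * Complex.I) := by
      apply Continuous.mul (by fun_prop)
      apply Complex.continuous_exp.comp
      apply Continuous.mul ?_ continuous_const
      apply Complex.continuous_ofReal.comp
      exact (continuous_subtype_val.comp continuous_snd).mul
        ((cont_argrV.comp continuous_fst).add continuous_const)
    exact (Complex.continuous_re.comp hd).prodMk (Complex.continuous_im.comp hd)
  · intro p
    apply tc_injective
    rw [tc_ofC]
    norm_num
  · intro p
    apply tc_injective
    rw [tc_ofC]
    have h1 : (((1 : unitInterval) : ℝ) * (Complex.arg (rV p) + Real.pi) : ℝ) =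
        Complex.arg (rV p) + Real.pi := by norm_num
    rw [h1, Complex.ofReal_add, add_mul, Complex.exp_add, Complex.exp_pi_mul_I]
    have h2 : Complex.exp ((Complex.arg (rV p) : ℂ) * Complex.I) = rV p := by
      have := Complex.norm_mul_exp_arg_mul_I (rV p)
      rwa [abs_rV, Complex.ofReal_one, one_mul] at this
    rw [h2]
    have hc : tc (p : ↥S1 × ↥S1).1 * (starRingEnd ℂ) (tc (p : ↥S1 × ↥S1).1) = 1 := by
      rw [Complex.mul_conj]
      norm_cast
      rw [← Complex.sq_norm, abs_tc]; norm_num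
    simp only [rV]
    linear_combination tc (p : ↥S1 × ↥S1).2 * hc

lemma slit_of_abs_one {z : ℂ} (hz : ‖z‖ = 1) (hne : z ≠ -1) :
    z ∈ Complex.slitPlane := by
  rw [Complex.mem_slitPlane_iff]
  by_contra h
  push_neg at h
  obtain ⟨h1, h2⟩ := h
  apply hne
  have : z.re = -1 := by
    rw [Complex.norm_def, Complex.normSq_apply, h2] at hz
    have h3 : Real.sqrt (z.re * z.re) = |z.re| := by
      rw [← Real.sqrt_sq_eq_abs]; ring_nf
    rw [mul_zero, add_zero, h3] at hz
    rw [abs_of_nonpos h1] at hz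
    linarith
  exact Complex.ext (by simpa using this) (by simpa using h2)

lemma ratio_ne_neg_one {z w : ℂ} (hz : ‖z‖ = 1) (hw : ‖w‖ = 1)
    (hd : dist z w < 2) : z * (starRingEnd ℂ) w ≠ -1 := by
  intro h
  have hw1 : w * (starRingEnd ℂ) w = 1 := by
    rw [Complex.mul_conj]; norm_cast; rw [← Complex.sq_norm, hw]; norm_num
  have hzw : z = -w := by
    calc z = z * (w * (starRingEnd ℂ) w) := by rw [hw1, mul_one]
    _ = (z * (starRingEnd ℂ) w) * w := by ring
    _ = -w := by rw [h]; ring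
  rw [Complex.dist_eq, hzw] at hd
  have : (-w - w) = -(2 * w) := by ring
  rw [this, norm_neg, norm_mul, hw, mul_one, Complex.norm_two] at hd
  linarith

/-- the antipodal map on the circle -/
def negS (x : ↥S1) : ↥S1 :=
  ⟨-(x : ℝ × ℝ), by
    have := x.2
    simp only [S1, mem_setOf_eq, Prod.fst_neg, Prod.snd_neg, neg_sq] at *
    exact this⟩

lemma cont_negS : Continuous negS := (continuous_subtype_val.neg).subtype_mk _

lemma tc_negS (x : ↥S1) : tc (negS x) = -tc x := by
  apply Complex.ext <;> simp [tc, negS]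

lemma negS_negS (x : ↥S1) : negS (negS x) = x := by
  apply Subtype.ext; simp [negS]

def eS : ↥S1 := ⟨(1, 0), by simp [S1]⟩

lemma tc_eS : tc eS = 1 := by apply Complex.ext <;> simp [tc, eS]

lemma prod_telescope (h : ℕ → ℂ) (hone : ∀ k, ‖h k‖ = 1) (n : ℕ) :
    ∏ k ∈ Finset.range n, (h (k + 1) * (starRingEnd ℂ) (h k)) = h n * (starRingEnd ℂ) (h 0) := by
  induction n with
  | zero =>
    simp only [Finset.range_zero, Finset.prod_empty]
    rw [Complex.mul_conj]; norm_cast; rw [← Complex.sq_norm, hone 0]; norm_num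
  | succ n ih =>
    rw [Finset.prod_range_succ, ih]
    have hn : h n * (starRingEnd ℂ) (h n) = 1 := by
      rw [Complex.mul_conj]; norm_cast; rw [← Complex.sq_norm, hone n]; norm_num
    calc h n * (starRingEnd ℂ) (h 0) * (h (n + 1) * (starRingEnd ℂ) (h n))
        = (h (n + 1) * (starRingEnd ℂ) (h 0)) * (h n * (starRingEnd ℂ) (h n)) := by ring
      _ = h (n + 1) * (starRingEnd ℂ) (h 0) := by rw [hn, mul_one]

lemma no_global_planner : ¬ HasMotionPlanner ↥S1 (univ : Set (↥S1 × ↥S1)) := by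
  rintro ⟨s, hs, hends⟩
  -- the contraction, as a complex-valued function
  set g : ↥S1 × unitInterval → ℂ :=
    fun q => tc (s ⟨(eS, q.1), mem_univ _⟩ q.2) with hg_def
  have hg_cont : Continuous g := by
    apply cont_tc.comp
    have h1 : Continuous fun q : ↥S1 × unitInterval =>
        ((s ⟨(eS, q.1), mem_univ _⟩ : C(unitInterval, ↥S1)), q.2) := by
      exact (hs.comp ((continuous_const.prodMk continuous_fst).subtype_mk _)).prodMk
        continuous_snd
    exact continuous_eval.comp h1
  have hg_abs : ∀ q, ‖g q‖ = 1 := fun q => abs_tc _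
  have hg0 : ∀ x, g (x, 0) = 1 := by
    intro x
    rw [hg_def]
    simp only []
    rw [(hends ⟨(eS, x), mem_univ _⟩).1, ← tc_eS]
  have hg1 : ∀ x, g (x, 1) = tc x := by
    intro x
    rw [hg_def]
    simp only []
    rw [(hends ⟨(eS, x), mem_univ _⟩).2]
  -- uniform continuity
  have hUC := CompactSpace.uniformContinuous_of_continuous hg_cont
  rw [Metric.uniformContinuous_iff] at hUC
  obtain ⟨δ, hδ, hδ2⟩ := hUC 2 (by norm_num)
  obtain ⟨n, hn⟩ := exists_nat_one_div_lt hδ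
  have hnpos : (0 : ℝ) < n + 1 := by positivity
  -- the subdivision points
  set N := n + 1 with hN
  have hNpos : (0 : ℝ) < N := by positivity
  set tk : ℕ → unitInterval := fun k => Set.projIcc 0 1 zero_le_one ((k : ℝ) / N) with htk
  have htk_coe : ∀ k : ℕ, k ≤ N → ((tk k : ℝ)) = (k : ℝ) / N := by
    intro k hk
    rw [htk]
    simp only [Set.projIcc, unitInterval]
    rw [max_eq_right, min_eq_right]
    · apply div_le_one_of_le₀ _ (le_of_lt hNpos)
      exact_mod_cast hk
    · simp only [le_min_iff]
      refine ⟨zero_le_one, by positivity⟩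
  have htk0 : tk 0 = 0 := by
    apply Subtype.ext
    rw [htk_coe 0 (by omega)]
    norm_num
  have htkN : tk N = 1 := by
    apply Subtype.ext
    rw [htk_coe N le_rfl]
    field_simp
    rfl
  -- consecutive values are close
  have hclose : ∀ (x : ↥S1) (k : ℕ), k < N →
      dist (g (x, tk (k + 1))) (g (x, tk k)) < 2 := by
    intro x k hk
    apply hδ2
    rw [Prod.dist_eq, dist_self, Subtype.dist_eq]
    rw [htk_coe (k + 1) (by omega), htk_coe k (by omega)]
    rw [max_eq_right dist_nonneg, Real.dist_eq]
    have he : |((k + 1 : ℕ) : ℝ) / N - (k : ℝ) / N| = 1 / N := by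
      rw [div_sub_div_same]
      push_cast
      rw [show ((k : ℝ) + 1 - k) = 1 by ring]
      rw [abs_of_pos (by positivity)]
    rw [he]
    calc (1 : ℝ) / N = 1 / (n + 1) := by rw [hN]; push_cast; ring
    _ < δ := hn
  -- the angle sum
  set r : ↥S1 → ℕ → ℂ :=
    fun x k => g (x, tk (k + 1)) * (starRingEnd ℂ) (g (x, tk k)) with hr
  have hr_abs : ∀ x k, ‖r x k‖ = 1 := by
    intro x k
    rw [hr]
    simp only []
    rw [norm_mul, Complex.norm_conj, hg_abs, hg_abs, mul_one]
  have hr_slit : ∀ x, ∀ k < N, r x k ∈ Complex.slitPlane := by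
    intro x k hk
    exact slit_of_abs_one (hr_abs x k) (ratio_ne_neg_one (hg_abs _) (hg_abs _) (hclose x k hk))
  set θ : ↥S1 → ℝ := fun x => ∑ k ∈ Finset.range N, Complex.arg (r x k) with hθ
  have hθ_cont : Continuous θ := by
    apply continuous_finset_sum
    intro k hk
    rw [continuous_iff_continuousAt]
    intro x
    have hrc : Continuous fun x => r x k := by
      apply Continuous.mul
      · exact hg_cont.comp (continuous_id.prodMk continuous_const)
      · exact Complex.continuous_conj.comp (hg_cont.comp (continuous_id.prodMk continuous_const))
    exact ContinuousAt.comp (g := Complex.arg) (f := fun x => r x k) (x := x)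
      (Complex.continuousAt_arg (hr_slit x k (Finset.mem_range.mp hk))) hrc.continuousAt
  have hexp : ∀ x, Complex.exp ((θ x : ℂ) * Complex.I) = tc x := by
    intro x
    rw [hθ]
    simp only []
    rw [Complex.ofReal_sum, Finset.sum_mul, Complex.exp_sum]
    have harg : ∀ k ∈ Finset.range N, Complex.exp ((Complex.arg (r x k) : ℂ) * Complex.I) = r x k := by
      intro k hk
      have h2 := Complex.norm_mul_exp_arg_mul_I (r x k)
      rwa [hr_abs, Complex.ofReal_one, one_mul] at h2
    rw [Finset.prod_congr rfl harg]
    have htel := prod_telescope (fun k => g (x, tk k)) (fun k => hg_abs _) N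
    rw [hr]
    simp only []
    rw [htel, htkN, htk0, hg1, hg0, map_one, mul_one]
  -- the odd function
  set ψ : ↥S1 → ℝ := fun x => θ x - θ (negS x) with hψ
  have hψ_cont : Continuous ψ := hθ_cont.sub (hθ_cont.comp cont_negS)
  have hψ_exp : ∀ x, Complex.exp ((ψ x : ℂ) * Complex.I) = -1 := by
    intro x
    rw [hψ]
    simp only []
    rw [Complex.ofReal_sub, sub_mul, Complex.exp_sub, hexp, hexp, tc_negS]
    rw [div_neg, div_self (tc_ne_zero x)]
  have hψ_neg : ψ (negS eS) = - ψ eS := by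
    rw [hψ]
    simp only []
    rw [negS_negS]
    ring
  have h0 : (0 : ℝ) ∈ range ψ := by
    rcases le_total (ψ eS) 0 with hc | hc
    · exact intermediate_value_univ eS (negS eS) hψ_cont ⟨hc, by rw [hψ_neg]; linarith⟩
    · exact intermediate_value_univ (negS eS) eS hψ_cont ⟨by rw [hψ_neg]; linarith, hc⟩
  obtain ⟨x, hx⟩ := h0
  have hcon := hψ_exp x
  rw [hx] at hcon
  norm_num at hcon

lemma tc_S1_eq_two : topComplexity ↥S1 = 2 := by
  apply le_antisymm
  · apply sInf_le
    refine ⟨2, by norm_num, ![Uset, Vset], ?_, ?_, ?_⟩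
    · intro i
      fin_cases i
      · exact isOpen_Uset
      · exact isOpen_Vset
    · intro p
      have hp : p ∈ Uset ∪ Vset := by rw [union_eq_univ]; exact mem_univ p
      rcases hp with h | h
      · exact ⟨0, h⟩
      · exact ⟨1, h⟩
    · intro i
      fin_cases i
      · exact planner_U
      · exact planner_V
  · apply le_sInf
    rintro N ⟨k, rfl, U, hopen, hcov, hpl⟩
    have hk : 2 ≤ k := by
      by_contra h
      push_neg at h
      interval_cases k
      · obtain ⟨i, _⟩ := hcov (eS, eS)
        exact i.elim0
      · apply no_global_planner
        have hU : U 0 = univ := by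
          apply eq_univ_of_forall
          intro p
          obtain ⟨i, hi⟩ := hcov p
          rwa [Subsingleton.elim i 0] at hi
        rw [← hU]
        exact hpl 0
    exact_mod_cast hk

theorem tc_circle_eq_two :
    topComplexity ↥S1 = 2 ∧
    IsOpen {p : ↥S1 × ↥S1 | (p.2 : ℝ × ℝ) ≠ -(p.1 : ℝ × ℝ)} ∧
    IsOpen {p : ↥S1 × ↥S1 | p.2 ≠ p.1} ∧
    {p : ↥S1 × ↥S1 | (p.2 : ℝ × ℝ) ≠ -(p.1 : ℝ × ℝ)} ∪ {p : ↥S1 × ↥S1 | p.2 ≠ p.1} = univ ∧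
    HasMotionPlanner ↥S1 {p : ↥S1 × ↥S1 | (p.2 : ℝ × ℝ) ≠ -(p.1 : ℝ × ℝ)} ∧
    HasMotionPlanner ↥S1 {p : ↥S1 × ↥S1 | p.2 ≠ p.1} ∧
    ¬ HasMotionPlanner ↥S1 (univ : Set (↥S1 × ↥S1)) :=
  ⟨tc_S1_eq_two, isOpen_Uset, isOpen_Vset, union_eq_univ, planner_U, planner_V,
    no_global_planner⟩
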